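/- Every integer point (x,y) ∈ ℤ² is periodic under the transcendental Hénon map h_∞(x,y) = (y, −x + (2/√3)·sin(πy/3)), and its exact (minimal) period belongs to the set {1, 4, 5, 6, 12, 20}. Moreover, the only point of period 1 is (0,0); the points of period 6 are exactly (1,0), (1,1), (0,1), (−1,0), (−1,−1), (0,−1); and the points of period 5 are exactly (2,0), (2,1), (1,2), (0,2), (−1,1), (−2,0), (−2,−1), (−1,−2), (0,−2), (1,−1). -/
import Mathlib

/-- The limiting (transcendental) Hénon map `h_∞(x,y) = (y, −x + (2/√3) sin(πy/3))`. -/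
noncomputable def henonInf (P : ℝ × ℝ) : ℝ × ℝ :=
  (P.2, -P.1 + 2 / Real.sqrt 3 * Real.sin (Real.pi * P.2 / 3))

/-- `P` is periodic for `h_∞` with exact (minimal) period `n`. -/
def ExactPeriod (n : ℕ) (P : ℝ × ℝ) : Prop :=
  1 ≤ n ∧ henonInf^[n] P = P ∧ ∀ m : ℕ, 1 ≤ m → m < n → henonInf^[m] P ≠ P

/-! ### The induced integer map -/

def gg (y : ℤ) : ℤ :=
  if y % 6 = 1 ∨ y % 6 = 2 then 1 else if y % 6 = 4 ∨ y % 6 = 5 then -1 else 0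

def G (p : ℤ × ℤ) : ℤ × ℤ := (p.2, -p.1 + gg p.2)

lemma gg_shift (y m : ℤ) : gg (y + 6 * m) = gg y := by
  simp [gg, Int.add_mul_emod_self_left]

/-! ### Real/integer bridge -/

lemma two_div_sqrt3 : 2 / Real.sqrt 3 * (Real.sqrt 3 / 2) = 1 := by field_simp

lemma sin_int (y : ℤ) : 2 / Real.sqrt 3 * Real.sin (Real.pi * y / 3) = (gg y : ℝ) := by
  obtain ⟨j, b, hy, hj0, hj6⟩ : ∃ j b, y = j + 6*b ∧ 0 ≤ j ∧ j < 6 :=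
    ⟨y % 6, y / 6, by omega, by omega, by omega⟩
  subst hy
  rw [show Real.pi * (↑(j + 6*b)) / 3 = Real.pi * j / 3 + b * (2 * Real.pi) by push_cast; ring,
    Real.sin_add_int_mul_two_pi, gg_shift]
  interval_cases j
  · norm_num [gg]
  · rw [show Real.pi * ((1:ℤ):ℝ) / 3 = Real.pi / 3 by push_cast; ring,
      Real.sin_pi_div_three, two_div_sqrt3]
    norm_num [gg]
  · rw [show Real.pi * ((2:ℤ):ℝ) / 3 = Real.pi - Real.pi / 3 by push_cast; ring,
      Real.sin_pi_sub, Real.sin_pi_div_three, two_div_sqrt3]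
    norm_num [gg]
  · rw [show Real.pi * ((3:ℤ):ℝ) / 3 = Real.pi by push_cast; ring, Real.sin_pi]
    norm_num [gg]
  · rw [show Real.pi * ((4:ℤ):ℝ) / 3 = Real.pi / 3 + Real.pi by push_cast; ring,
      Real.sin_add_pi, Real.sin_pi_div_three]
    norm_num [gg, mul_neg, two_div_sqrt3]
  · rw [show Real.pi * ((5:ℤ):ℝ) / 3 = -(Real.pi / 3) + (1:ℤ) * (2 * Real.pi) by push_cast; ring,
      Real.sin_add_int_mul_two_pi, Real.sin_neg, Real.sin_pi_div_three]
    norm_num [gg, mul_neg, two_div_sqrt3]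

lemma henon_cast (p : ℤ × ℤ) : henonInf ((p.1:ℝ), (p.2:ℝ)) = (((G p).1:ℝ), ((G p).2:ℝ)) := by
  simp only [henonInf, G, sin_int]
  push_cast
  ring_nf

lemma iter_cast (n : ℕ) (p : ℤ × ℤ) :
    henonInf^[n] ((p.1:ℝ), (p.2:ℝ)) = (((G^[n] p).1:ℝ), ((G^[n] p).2:ℝ)) := by
  induction n with
  | zero => simp
  | succ n ih => rw [Function.iterate_succ_apply', Function.iterate_succ_apply', ih, henon_cast]

lemma iter_cast_iff (k : ℕ) (x y : ℤ) :
    henonInf^[k] ((x:ℝ), (y:ℝ)) = ((x:ℝ), (y:ℝ)) ↔ G^[k] (x,y) = (x,y) := by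
  rw [show ((x:ℝ), (y:ℝ)) = ((((x,y) : ℤ×ℤ).1 : ℝ), (((x,y) : ℤ×ℤ).2 : ℝ)) from rfl, iter_cast]
  constructor
  · intro h
    have h1 := congrArg Prod.fst h
    have h2 := congrArg Prod.snd h
    simp only at h1 h2
    exact Prod.ext (by exact_mod_cast h1) (by exact_mod_cast h2)
  · intro h; rw [h]

lemma exact_iff (n : ℕ) (x y : ℤ) :
    ExactPeriod n ((x:ℝ), (y:ℝ)) ↔
      (1 ≤ n ∧ G^[n] (x,y) = (x,y) ∧ ∀ m : ℕ, 1 ≤ m → m < n → G^[m] (x,y) ≠ (x,y)) := by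
  unfold ExactPeriod
  simp only [ne_eq, iter_cast_iff]

/-! ### Translation structure -/

def rot : ℕ → ℤ × ℤ → ℤ × ℤ
  | 0, v => v
  | n+1, v => ((rot n v).2, -(rot n v).1)

lemma rot_four (n : ℕ) (v : ℤ × ℤ) : rot (n + 4) v = rot n v := by
  show rot (n+1+1+1+1) v = rot n v
  simp [rot]

lemma Giter_shift (n : ℕ) (i j a b : ℤ) :
    G^[n] (i + 6*a, j + 6*b) =
      ((G^[n] (i,j)).1 + 6 * (rot n (a,b)).1, (G^[n] (i,j)).2 + 6 * (rot n (a,b)).2) := by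
  induction n with
  | zero => simp [rot]
  | succ n ih =>
    rw [Function.iterate_succ_apply', Function.iterate_succ_apply', ih]
    simp only [G, rot, gg_shift]
    simp only [Prod.mk.injEq]
    exact ⟨trivial, by ring⟩

lemma rot1 (a b : ℤ) : rot 1 (a,b) = (b,-a) := rfl
lemma rot2 (a b : ℤ) : rot 2 (a,b) = (-a,-b) := by simp [rot]
lemma rot3 (a b : ℤ) : rot 3 (a,b) = (-b,a) := by simp [rot]
lemma rot5 (a b : ℤ) : rot 5 (a,b) = (b,-a) := by
  rw [show (5:ℕ) = 1+4 from rfl, rot_four, rot1]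
lemma rot6 (a b : ℤ) : rot 6 (a,b) = (-a,-b) := by
  rw [show (6:ℕ) = 2+4 from rfl, rot_four, rot2]
lemma rot10 (a b : ℤ) : rot 10 (a,b) = (-a,-b) := by
  rw [show (10:ℕ) = 2+4+4 from rfl, rot_four, rot_four, rot2]
lemma rot12 (a b : ℤ) : rot 12 (a,b) = (a,b) := by
  rw [show (12:ℕ) = 0+4+4+4 from rfl, rot_four, rot_four, rot_four]; rfl
lemma rot20 (a b : ℤ) : rot 20 (a,b) = (a,b) := by
  rw [show (20:ℕ) = 0+4+4+4+4+4 from rfl,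
    rot_four, rot_four, rot_four, rot_four, rot_four]; rfl

/-! ### Fixed-point computations -/

lemma decomp (x : ℤ) : ∃ i a, x = i + 6*a ∧ 0 ≤ i ∧ i < 6 :=
  ⟨x % 6, x / 6, by omega, by omega, by omega⟩

lemma fix1 (x y : ℤ) (h : G^[1] (x,y) = (x,y)) : x = 0 ∧ y = 0 := by
  obtain ⟨i, a, rfl, hi0, hi6⟩ := decomp x
  obtain ⟨j, b, rfl, hj0, hj6⟩ := decomp y
  rw [Giter_shift, rot1] at h
  interval_cases i <;> interval_cases j <;>
    norm_num [Function.iterate_succ, Function.iterate_zero, Function.comp, G, gg,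
      Prod.mk.injEq] at h <;>
    omega

lemma fix2 (x y : ℤ) (h : G^[2] (x,y) = (x,y)) : x = 0 ∧ y = 0 := by
  obtain ⟨i, a, rfl, hi0, hi6⟩ := decomp x
  obtain ⟨j, b, rfl, hj0, hj6⟩ := decomp y
  rw [Giter_shift, rot2] at h
  interval_cases i <;> interval_cases j <;>
    norm_num [Function.iterate_succ, Function.iterate_zero, Function.comp, G, gg,
      Prod.mk.injEq] at h <;>
    omega

lemma fix3 (x y : ℤ) (h : G^[3] (x,y) = (x,y)) : x = 0 ∧ y = 0 := by
  obtain ⟨i, a, rfl, hi0, hi6⟩ := decomp x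
  obtain ⟨j, b, rfl, hj0, hj6⟩ := decomp y
  rw [Giter_shift, rot3] at h
  interval_cases i <;> interval_cases j <;>
    norm_num [Function.iterate_succ, Function.iterate_zero, Function.comp, G, gg,
      Prod.mk.injEq] at h <;>
    omega

lemma fix5 (x y : ℤ) (h : G^[5] (x,y) = (x,y)) :
    (x=0 ∧ y=0) ∨ (x=2 ∧ y=0) ∨ (x=2 ∧ y=1) ∨ (x=1 ∧ y=2) ∨ (x=0 ∧ y=2) ∨ (x=-1 ∧ y=1) ∨
    (x=-2 ∧ y=0) ∨ (x=-2 ∧ y=-1) ∨ (x=-1 ∧ y=-2) ∨ (x=0 ∧ y=-2) ∨ (x=1 ∧ y=-1) := by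
  obtain ⟨i, a, rfl, hi0, hi6⟩ := decomp x
  obtain ⟨j, b, rfl, hj0, hj6⟩ := decomp y
  rw [Giter_shift, rot5] at h
  interval_cases i <;> interval_cases j <;>
    norm_num [Function.iterate_succ, Function.iterate_zero, Function.comp, G, gg,
      Prod.mk.injEq] at h <;>
    omega

lemma fix6 (x y : ℤ) (h : G^[6] (x,y) = (x,y)) :
    (x=0 ∧ y=0) ∨ (x=1 ∧ y=0) ∨ (x=1 ∧ y=1) ∨ (x=0 ∧ y=1) ∨ (x=-1 ∧ y=0) ∨
    (x=-1 ∧ y=-1) ∨ (x=0 ∧ y=-1) := by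
  obtain ⟨i, a, rfl, hi0, hi6⟩ := decomp x
  obtain ⟨j, b, rfl, hj0, hj6⟩ := decomp y
  rw [Giter_shift, rot6] at h
  interval_cases i <;> interval_cases j <;>
    norm_num [Function.iterate_succ, Function.iterate_zero, Function.comp, G, gg,
      Prod.mk.injEq] at h <;>
    omega

set_option maxHeartbeats 1000000 in
lemma fix10 (x y : ℤ) (h : G^[10] (x,y) = (x,y)) :
    (x=0 ∧ y=0) ∨ (x=2 ∧ y=0) ∨ (x=2 ∧ y=1) ∨ (x=1 ∧ y=2) ∨ (x=0 ∧ y=2) ∨ (x=-1 ∧ y=1) ∨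
    (x=-2 ∧ y=0) ∨ (x=-2 ∧ y=-1) ∨ (x=-1 ∧ y=-2) ∨ (x=0 ∧ y=-2) ∨ (x=1 ∧ y=-1) := by
  obtain ⟨i, a, rfl, hi0, hi6⟩ := decomp x
  obtain ⟨j, b, rfl, hj0, hj6⟩ := decomp y
  rw [Giter_shift, rot10] at h
  interval_cases i <;> interval_cases j <;>
    norm_num [Function.iterate_succ, Function.iterate_zero, Function.comp, G, gg,
      Prod.mk.injEq] at h <;>
    omega

lemma fix10_to_5 (x y : ℤ) (h : G^[10] (x,y) = (x,y)) : G^[5] (x,y) = (x,y) := by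
  rcases fix10 x y h with ⟨rfl,rfl⟩|⟨rfl,rfl⟩|⟨rfl,rfl⟩|⟨rfl,rfl⟩|⟨rfl,rfl⟩|⟨rfl,rfl⟩|
    ⟨rfl,rfl⟩|⟨rfl,rfl⟩|⟨rfl,rfl⟩|⟨rfl,rfl⟩|⟨rfl,rfl⟩ <;> decide

lemma base_12_or_20 (i j : ℤ) (hi0 : 0 ≤ i) (hi6 : i < 6) (hj0 : 0 ≤ j) (hj6 : j < 6) :
    G^[12] (i,j) = (i,j) ∨ G^[20] (i,j) = (i,j) := by
  interval_cases i <;> interval_cases j <;> first | (left; decide) | (right; decide)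

lemma all_12_or_20 (x y : ℤ) : G^[12] (x,y) = (x,y) ∨ G^[20] (x,y) = (x,y) := by
  obtain ⟨i, a, rfl, hi0, hi6⟩ := decomp x
  obtain ⟨j, b, rfl, hj0, hj6⟩ := decomp y
  rcases base_12_or_20 i j hi0 hi6 hj0 hj6 with h | h
  · left; rw [Giter_shift, rot12, h]
  · right; rw [Giter_shift, rot20, h]

/-! ### Main theorem -/

set_option maxHeartbeats 2000000 in
theorem henonInf_integer_periods :
    (∀ x y : ℤ, ∃ n ∈ ({1, 4, 5, 6, 12, 20} : Set ℕ), ExactPeriod n ((x : ℝ), (y : ℝ))) ∧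
    (∀ x y : ℤ, ExactPeriod 1 ((x : ℝ), (y : ℝ)) ↔ (x, y) = ((0 : ℤ), (0 : ℤ))) ∧
    (∀ x y : ℤ, ExactPeriod 6 ((x : ℝ), (y : ℝ)) ↔
      (x, y) ∈ ({(1, 0), (1, 1), (0, 1), (-1, 0), (-1, -1), (0, -1)} : Set (ℤ × ℤ))) ∧
    (∀ x y : ℤ, ExactPeriod 5 ((x : ℝ), (y : ℝ)) ↔
      (x, y) ∈ ({(2, 0), (2, 1), (1, 2), (0, 2), (-1, 1),
        (-2, 0), (-2, -1), (-1, -2), (0, -2), (1, -1)} : Set (ℤ × ℤ))) := by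
  refine ⟨?_, ?_, ?_, ?_⟩
  · -- every point has exact period in the set
    intro x y
    set p : ℤ × ℤ := (x, y) with hp
    set m := Function.minimalPeriod G p with hm
    have hper : Function.IsPeriodicPt G 12 p ∨ Function.IsPeriodicPt G 20 p :=
      all_12_or_20 x y
    have hmpos : 0 < m := by
      rcases hper with h | h
      · exact h.minimalPeriod_pos (by norm_num)
      · exact h.minimalPeriod_pos (by norm_num)
    have hGm : G^[m] p = p := Function.isPeriodicPt_minimalPeriod G p
    have hdvd : m ∣ 12 ∨ m ∣ 20 := by
      rcases hper with h | h
      · exact Or.inl h.minimalPeriod_dvd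
      · exact Or.inr h.minimalPeriod_dvd
    have hne2 : m ≠ 2 := by
      intro he
      have h2 : G^[2] p = p := he ▸ hGm
      obtain ⟨hx0, hy0⟩ := fix2 x y h2
      have h1 : Function.IsPeriodicPt G 1 p := by
        show G^[1] p = p
        rw [hp, hx0, hy0]; decide
      have := h1.minimalPeriod_le (by norm_num)
      omega
    have hne3 : m ≠ 3 := by
      intro he
      have h3 : G^[3] p = p := he ▸ hGm
      obtain ⟨hx0, hy0⟩ := fix3 x y h3
      have h1 : Function.IsPeriodicPt G 1 p := by
        show G^[1] p = p
        rw [hp, hx0, hy0]; decide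
      have := h1.minimalPeriod_le (by norm_num)
      omega
    have hne10 : m ≠ 10 := by
      intro he
      have h10 : G^[10] p = p := he ▸ hGm
      have h5 : Function.IsPeriodicPt G 5 p := fix10_to_5 x y h10
      have := h5.minimalPeriod_le (by norm_num)
      omega
    have hmem : m = 1 ∨ m = 4 ∨ m = 5 ∨ m = 6 ∨ m = 12 ∨ m = 20 := by
      have hle : m ≤ 20 := by
        rcases hdvd with h | h
        · exact le_trans (Nat.le_of_dvd (by norm_num) h) (by norm_num)
        · exact Nat.le_of_dvd (by norm_num) h
      interval_cases m <;> rcases hdvd with h | h <;> omega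
    refine ⟨m, by rcases hmem with h|h|h|h|h|h <;> simp [h], ?_⟩
    rw [exact_iff]
    refine ⟨hmpos, hGm, fun k hk1 hkm hGk => ?_⟩
    exact Function.not_isPeriodicPt_of_pos_of_lt_minimalPeriod
      (by omega : k ≠ 0) hkm hGk
  · -- period 1
    intro x y
    rw [exact_iff]
    constructor
    · rintro ⟨-, h1, -⟩
      obtain ⟨rfl, rfl⟩ := fix1 x y h1
      rfl
    · rintro h
      obtain ⟨rfl, rfl⟩ : x = 0 ∧ y = 0 := by
        simpa [Prod.ext_iff] using h
      exact ⟨le_refl 1, by decide, fun m h1 h2 => by omega⟩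
  · -- period 6
    intro x y
    rw [exact_iff]
    constructor
    · rintro ⟨-, h6, hmin⟩
      have hne1 : ¬ (x = 0 ∧ y = 0) := by
        rintro ⟨rfl, rfl⟩
        exact hmin 1 (by norm_num) (by norm_num) (by decide)
      rcases fix6 x y h6 with h|h|h|h|h|h|h <;>
        simp [Set.mem_insert_iff, Set.mem_singleton_iff, Prod.mk.injEq] <;> tauto
    · intro h
      simp only [Set.mem_insert_iff, Set.mem_singleton_iff, Prod.mk.injEq] at h
      refine ⟨by norm_num, ?_, ?_⟩
      · rcases h with ⟨rfl,rfl⟩|⟨rfl,rfl⟩|⟨rfl,rfl⟩|⟨rfl,rfl⟩|⟨rfl,rfl⟩|⟨rfl,rfl⟩ <;> decide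
      · intro k h1 h6
        interval_cases k <;>
          rcases h with ⟨rfl,rfl⟩|⟨rfl,rfl⟩|⟨rfl,rfl⟩|⟨rfl,rfl⟩|⟨rfl,rfl⟩|⟨rfl,rfl⟩ <;> decide
  · -- period 5
    intro x y
    rw [exact_iff]
    constructor
    · rintro ⟨-, h5, hmin⟩
      have hne1 : ¬ (x = 0 ∧ y = 0) := by
        rintro ⟨rfl, rfl⟩
        exact hmin 1 (by norm_num) (by norm_num) (by decide)
      rcases fix5 x y h5 with h|h|h|h|h|h|h|h|h|h|h <;>
        simp [Set.mem_insert_iff, Set.mem_singleton_iff, Prod.mk.injEq] <;> tauto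
    · intro h
      simp only [Set.mem_insert_iff, Set.mem_singleton_iff, Prod.mk.injEq] at h
      refine ⟨by norm_num, ?_, ?_⟩
      · rcases h with ⟨rfl,rfl⟩|⟨rfl,rfl⟩|⟨rfl,rfl⟩|⟨rfl,rfl⟩|⟨rfl,rfl⟩|⟨rfl,rfl⟩|
          ⟨rfl,rfl⟩|⟨rfl,rfl⟩|⟨rfl,rfl⟩|⟨rfl,rfl⟩ <;> decide
      · intro k h1 h5'
        interval_cases k <;>
          rcases h with ⟨rfl,rfl⟩|⟨rfl,rfl⟩|⟨rfl,rfl⟩|⟨rfl,rfl⟩|⟨rfl,rfl⟩|⟨rfl,rfl⟩|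
            ⟨rfl,rfl⟩|⟨rfl,rfl⟩|⟨rfl,rfl⟩|⟨rfl,rfl⟩ <;> decide
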